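/- Let D be a closed subset of [0,1] × [0,1] that is locally direct product and contains the diagonal, i.e., (t,t) ∈ D for every t ∈ [0,1]. Then D = [0,1] × [0,1]. -/

import Mathlib

/-- A subset `C` of `X × Y` is *locally direct product* if for every point `(a, b)` of
`X × Y` there are an open set `U` of `X`, an open set `V` of `Y`, a subset `I` of `U` and
a subset `J` of `V` such that `(a, b) ∈ U × V` and `C ∩ (U × V) = I × J`. -/
def LocallyDirectProduct {X Y : Type*} [TopologicalSpace X] [TopologicalSpace Y]
    (C : Set (X × Y)) : Prop :=
  ∀ p : X × Y, ∃ (U : Set X) (V : Set Y) (I : Set X) (J : Set Y),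
    IsOpen U ∧ IsOpen V ∧ I ⊆ U ∧ J ⊆ V ∧ p.1 ∈ U ∧ p.2 ∈ V ∧ C ∩ U ×ˢ V = I ×ˢ J

theorem stmt_6 (D : Set (unitInterval × unitInterval)) (hcl : IsClosed D)
    (hloc : LocallyDirectProduct D) (hdiag : ∀ t : unitInterval, (t, t) ∈ D) :
    D = Set.univ := by
  classical
  choose U V I J hU hV hIU hJV hpU hpV hprod using hloc
  obtain ⟨δ, hδ, hball⟩ :
      ∃ δ > 0, ∀ x : unitInterval × unitInterval, ∃ p, Metric.ball x δ ⊆ U p ×ˢ V p := by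
    obtain ⟨δ, hδ, h⟩ := lebesgue_number_lemma_of_metric (s := (Set.univ : Set (unitInterval × unitInterval)))
      isCompact_univ (fun p => (hU p).prod (hV p))
      (fun x _ => Set.mem_iUnion.2 ⟨x, hpU x, hpV x⟩)
    exact ⟨δ, hδ, fun x => h x (Set.mem_univ x)⟩
  -- rectangle completion lemma
  have rect : ∀ a a' b b' : unitInterval, dist a a' < δ → dist b b' < δ →
      (a, b) ∈ D → (a', b) ∈ D → (a, b') ∈ D → (a', b') ∈ D := by
    intro a a' b b' haa hbb hab ha'b hab'
    obtain ⟨p, hp⟩ := hball (a, b)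
    have mem : ∀ x y : unitInterval, dist x a < δ → dist y b < δ → (x, y) ∈ U p ×ˢ V p := by
      intro x y hx hy
      exact hp (by rw [Metric.mem_ball, Prod.dist_eq]; exact max_lt hx hy)
    have h1 : (a', b) ∈ I p ×ˢ J p := by
      rw [← hprod p]; exact ⟨ha'b, mem a' b (by rwa [dist_comm]) (by simp [hδ])⟩
    have h2 : (a, b') ∈ I p ×ˢ J p := by
      rw [← hprod p]; exact ⟨hab', mem a b' (by simp [hδ]) (by rwa [dist_comm])⟩
    have h3 : (a', b') ∈ I p ×ˢ J p := ⟨h1.1, h2.2⟩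
    rw [← hprod p] at h3
    exact h3.1
  -- diagonal band
  have band : ∀ s t : unitInterval, dist s t < δ → (s, t) ∈ D := by
    intro s t hst
    obtain ⟨p, hp⟩ := hball (s, s)
    have mem : ∀ x : unitInterval, dist x s < δ → (x, x) ∈ U p ×ˢ V p := by
      intro x hx
      exact hp (by rw [Metric.mem_ball, Prod.dist_eq]; exact max_lt hx hx)
    have h1 : (s, s) ∈ I p ×ˢ J p := by
      rw [← hprod p]; exact ⟨hdiag s, mem s (by simp [hδ])⟩
    have h2 : (t, t) ∈ I p ×ˢ J p := by
      rw [← hprod p]; exact ⟨hdiag t, mem t (by rwa [dist_comm])⟩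
    have h3 : (s, t) ∈ I p ×ˢ J p := ⟨h1.1, h2.2⟩
    rw [← hprod p] at h3
    exact h3.1
  have dist_eq : ∀ s t : unitInterval, dist s t = |s.1 - t.1| := by
    intro s t; rw [Subtype.dist_eq, Real.dist_eq]
  -- the inductive widening of the band
  have main : ∀ n : ℕ, ∀ s t : unitInterval, dist s t ≤ n * (δ / 2) → (s, t) ∈ D := by
    intro n
    induction n with
    | zero =>
      intro s t h
      exact band s t (by push_cast at h; linarith)
    | succ n ih =>
      intro s t h
      by_cases hlt : dist s t < δ
      · exact band s t hlt
      push_neg at hlt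
      have hd := dist_eq s t
      push_cast at h
      rcases le_total s.1 t.1 with hle | hle
      · have habs : |s.1 - t.1| = t.1 - s.1 := by rw [abs_sub_comm]; exact abs_of_nonneg (by linarith)
        rw [hd, habs] at h hlt
        have hx0 : (0:ℝ) ≤ s.1 + δ/2 := by have := s.2.1; linarith
        have hx1 : s.1 + δ/2 ≤ 1 := by have := t.2.2; linarith
        have hb0 : (0:ℝ) ≤ t.1 - δ/2 := by have := s.2.1; linarith
        have hb1 : t.1 - δ/2 ≤ 1 := by have := t.2.2; linarith
        set x : unitInterval := ⟨s.1 + δ/2, hx0, hx1⟩ with hxdef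
        set b : unitInterval := ⟨t.1 - δ/2, hb0, hb1⟩ with hbdef
        have hxt : (x, t) ∈ D := by
          apply ih; rw [dist_eq]
          rw [abs_of_nonpos (by dsimp [x, b]; linarith)]
          dsimp [x, b]; linarith
        have hsb : (s, b) ∈ D := by
          apply ih; rw [dist_eq]
          rw [abs_of_nonpos (by dsimp [x, b]; linarith)]
          dsimp [x, b]; linarith
        have hxb : (x, b) ∈ D := by
          apply ih; rw [dist_eq]
          dsimp [x, b]
          rcases le_total (s.1 + δ/2) (t.1 - δ/2) with h2 | h2
          · rw [abs_of_nonpos (by linarith)]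
            rcases Nat.eq_zero_or_pos n with rfl | hn
            · exfalso; push_cast at *; linarith
            · have : (1:ℝ) ≤ n := by exact_mod_cast hn
              nlinarith
          · rw [abs_of_nonneg (by linarith)]
            rcases Nat.eq_zero_or_pos n with rfl | hn
            · exfalso; push_cast at *; linarith
            · have : (1:ℝ) ≤ n := by exact_mod_cast hn
              nlinarith
        refine rect x s b t ?_ ?_ hxb hsb hxt
        · rw [dist_eq]; dsimp [x, b]; rw [abs_of_nonneg (by linarith)]; linarith
        · rw [dist_eq]; dsimp [x, b]; rw [abs_of_nonpos (by linarith)]; linarith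
      · have habs : |s.1 - t.1| = s.1 - t.1 := abs_of_nonneg (by linarith)
        rw [hd, habs] at h hlt
        have hx0 : (0:ℝ) ≤ s.1 - δ/2 := by have := t.2.1; linarith
        have hx1 : s.1 - δ/2 ≤ 1 := by have := s.2.2; linarith
        have hb0 : (0:ℝ) ≤ t.1 + δ/2 := by have := t.2.1; linarith
        have hb1 : t.1 + δ/2 ≤ 1 := by have := s.2.2; linarith
        set x : unitInterval := ⟨s.1 - δ/2, hx0, hx1⟩ with hxdef
        set b : unitInterval := ⟨t.1 + δ/2, hb0, hb1⟩ with hbdef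
        have hxt : (x, t) ∈ D := by
          apply ih; rw [dist_eq]
          rw [abs_of_nonneg (by dsimp [x, b]; linarith)]
          dsimp [x, b]; linarith
        have hsb : (s, b) ∈ D := by
          apply ih; rw [dist_eq]
          rw [abs_of_nonneg (by dsimp [x, b]; linarith)]
          dsimp [x, b]; linarith
        have hxb : (x, b) ∈ D := by
          apply ih; rw [dist_eq]
          dsimp [x, b]
          rcases le_total (s.1 - δ/2) (t.1 + δ/2) with h2 | h2
          · rw [abs_of_nonpos (by linarith)]
            rcases Nat.eq_zero_or_pos n with rfl | hn
            · exfalso; push_cast at *; linarith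
            · have : (1:ℝ) ≤ n := by exact_mod_cast hn
              nlinarith
          · rw [abs_of_nonneg (by linarith)]
            rcases Nat.eq_zero_or_pos n with rfl | hn
            · exfalso; push_cast at *; linarith
            · have : (1:ℝ) ≤ n := by exact_mod_cast hn
              nlinarith
        refine rect x s b t ?_ ?_ hxb hsb hxt
        · rw [dist_eq]; dsimp [x, b]; rw [abs_of_nonpos (by linarith)]; linarith
        · rw [dist_eq]; dsimp [x, b]; rw [abs_of_nonneg (by linarith)]; linarith
  -- conclude
  ext ⟨s, t⟩
  simp only [Set.mem_univ, iff_true]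
  obtain ⟨n, hn⟩ := exists_nat_ge (2 / δ)
  apply main n
  have h1 : dist s t ≤ 1 := by
    rw [dist_eq]
    have hs := s.2; have ht := t.2
    rw [Set.mem_Icc] at hs ht
    rw [abs_le]; constructor <;> [linarith [hs.1, ht.2]; linarith [hs.2, ht.1]]
  have h2 : (1:ℝ) ≤ n * (δ/2) := by
    have h3 : 2 / δ * (δ / 2) ≤ (n:ℝ) * (δ/2) :=
      mul_le_mul_of_nonneg_right hn (by positivity)
    have h4 : 2 / δ * (δ / 2) = 1 := by field_simp
    linarith
  linarith
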